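/- Let z_1, z_n, z' be complex numbers, q ∈ ℂ^× not a root of unity, and let A, M be integers with 0 < A ≤ M (playing the roles of −a_{n,n−1} and m_n). If −z_1 [rA] q^{r(A−M)} + z_n [rM] = z' q^{rA} [r(M−A)] holds for all nonzero integers r, where [k] = (q^k − q^{−k})/(q − q^{−1}), then z_1 = z_n = z'. -/

import Mathlib

/-- The quantum integer `[k] = (q^k - q^{-k})/(q - q^{-1})`. -/
noncomputable def qint (q : ℂ) (k : ℤ) : ℂ := (q ^ k - q ^ (-k)) / (q - q⁻¹)

lemma zpow_ne_one' (q : ℂ) (hq : q ≠ 0) (hroot : ∀ n : ℕ, 0 < n → q ^ n ≠ 1)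
    (k : ℤ) (hk : k ≠ 0) : q ^ k ≠ 1 := by
  rcases lt_or_gt_of_ne hk with hlt | hgt
  · intro he
    have h2 : q ^ (-k) = 1 := by rw [zpow_neg, he, inv_one]
    have hn : q ^ (-k).toNat = 1 := by
      rw [← zpow_natCast, Int.toNat_of_nonneg (by omega)]; exact h2
    exact hroot _ (by omega) hn
  · intro he
    have hn : q ^ k.toNat = 1 := by
      rw [← zpow_natCast, Int.toNat_of_nonneg (by omega)]; exact he
    exact hroot _ (by omega) hn

lemma vand3 {u v w c1 c2 c3 : ℂ} (hu : u ≠ 0) (hv : v ≠ 0) (hw : w ≠ 0)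
    (huv : u ≠ v) (huw : u ≠ w) (hvw : v ≠ w)
    (e1 : c1 * u + c2 * v + c3 * w = 0)
    (e2 : c1 * u ^ 2 + c2 * v ^ 2 + c3 * w ^ 2 = 0)
    (e3 : c1 * u ^ 3 + c2 * v ^ 3 + c3 * w ^ 3 = 0) :
    c1 = 0 ∧ c2 = 0 ∧ c3 = 0 := by
  have huv' := sub_ne_zero.mpr huv
  have huw' := sub_ne_zero.mpr huw
  have hvw' := sub_ne_zero.mpr hvw
  have hvu' := sub_ne_zero.mpr huv.symm
  have hwu' := sub_ne_zero.mpr huw.symm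
  have hwv' := sub_ne_zero.mpr hvw.symm
  have h1 : c1 * (u * ((u - v) * (u - w))) = 0 := by
    linear_combination e3 - (v + w) * e2 + v * w * e1
  have h2 : c2 * (v * ((v - u) * (v - w))) = 0 := by
    linear_combination e3 - (u + w) * e2 + u * w * e1
  have h3 : c3 * (w * ((w - u) * (w - v))) = 0 := by
    linear_combination e3 - (u + v) * e2 + u * v * e1
  exact ⟨(mul_eq_zero.mp h1).resolve_right (mul_ne_zero hu (mul_ne_zero huv' huw')),
    (mul_eq_zero.mp h2).resolve_right (mul_ne_zero hv (mul_ne_zero hvu' hvw')),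
    (mul_eq_zero.mp h3).resolve_right (mul_ne_zero hw (mul_ne_zero hwu' hwv'))⟩

/-- if `−z₁ [rA] q^{r(A−M)} + z_n [rM] = z' q^{rA} [r(M−A)]`
holds for all nonzero integers `r` (with `q` not a root of unity and
`0 < A < M`), then `z₁ = z_n = z'`. -/
theorem stmt_13 (q : ℂ) (hq : q ≠ 0) (hroot : ∀ n : ℕ, 0 < n → q ^ n ≠ 1)
    (A M : ℤ) (hA : 0 < A) (hAM : A < M)
    (z₁ zn z' : ℂ)
    (h : ∀ r : ℤ, r ≠ 0 →
      -z₁ * qint q (r * A) * q ^ (r * (A - M)) + zn * qint q (r * M)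
        = z' * q ^ (r * A) * qint q (r * (M - A))) :
    z₁ = zn ∧ zn = z' := by
  have hzne := zpow_ne_one' q hq hroot
  have hs : q - q⁻¹ ≠ 0 := by
    intro he
    apply hroot 2 (by norm_num)
    have h1 := sub_eq_zero.mp he
    rw [pow_two, show q * q = q * q⁻¹ by rw [← h1], mul_inv_cancel₀ hq]
  have hs2 : q * q - 1 ≠ 0 := by
    intro he
    apply hs
    have : q * (q - q⁻¹) = q * q - 1 := by
      field_simp
    have h0 : q * (q - q⁻¹) = 0 := by rw [this, he]
    rcases mul_eq_zero.mp h0 with h | h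
    · exact absurd h hq
    · exact h
  have key : ∀ r : ℤ, r ≠ 0 →
      (zn - z') * q ^ (r * M) + (z₁ - zn) * (q ^ (r * M))⁻¹
        + (z' - z₁) * (q ^ (r * A) * q ^ (r * A) * (q ^ (r * M))⁻¹) = 0 := by
    intro r hr
    have hh := h r hr
    unfold qint at hh
    have E1 : q ^ (r * (A - M)) = q ^ (r * A) * (q ^ (r * M))⁻¹ := by
      rw [← zpow_neg, ← zpow_add₀ hq]; congr 1; ring
    have E2 : q ^ (r * (M - A)) = q ^ (r * M) * (q ^ (r * A))⁻¹ := by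
      rw [← zpow_neg, ← zpow_add₀ hq]; congr 1; ring
    have E3 : q ^ (-(r * (M - A))) = q ^ (r * A) * (q ^ (r * M))⁻¹ := by
      rw [← zpow_neg, ← zpow_add₀ hq]; congr 1; ring
    have E6 : q ^ (-(r * A)) = (q ^ (r * A))⁻¹ := by rw [zpow_neg]
    have E7 : q ^ (-(r * M)) = (q ^ (r * M))⁻¹ := by rw [zpow_neg]
    rw [E1, E2, E3, E6, E7] at hh
    have hX : q ^ (r * A) ≠ 0 := zpow_ne_zero _ hq
    have hY : q ^ (r * M) ≠ 0 := zpow_ne_zero _ hq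
    set X := q ^ (r * A) with hXdef
    set Y := q ^ (r * M) with hYdef
    field_simp [hs2] at hh
    have h0 : (X * X * Y * Y * q * ((q * q - 1) * (q * q - 1))) *
        ((zn - z') * (Y * Y) + (z₁ - zn) + (z' - z₁) * (X * X)) = 0 := by
      rw [div_left_inj' (by rw [sq]; exact hs2)] at hh; linear_combination (X * X * Y * Y * q * ((q * q - 1) * (q * q - 1))) * hh
    have hf : X * X * Y * Y * q * ((q * q - 1) * (q * q - 1)) ≠ 0 :=
      mul_ne_zero (mul_ne_zero (mul_ne_zero (mul_ne_zero (mul_ne_zero hX hX) hY) hY) hq)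
        (mul_ne_zero hs2 hs2)
    have h1 : (zn - z') * (Y * Y) + (z₁ - zn) + (z' - z₁) * (X * X) = 0 :=
      (mul_eq_zero.mp h0).resolve_left hf
    field_simp
    linear_combination h1
  -- now instantiate at r = 1, 2, 3
  have hu : q ^ M ≠ 0 := zpow_ne_zero _ hq
  have ha : q ^ A ≠ 0 := zpow_ne_zero _ hq
  have hv : (q ^ M)⁻¹ ≠ 0 := inv_ne_zero hu
  have hw : q ^ A * q ^ A * (q ^ M)⁻¹ ≠ 0 := mul_ne_zero (mul_ne_zero ha ha) hv
  have huv : q ^ M ≠ (q ^ M)⁻¹ := by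
    intro he
    apply hzne (M + M) (by omega)
    field_simp at he
    rw [zpow_add₀ hq]
    linear_combination he
  have huw : q ^ M ≠ q ^ A * q ^ A * (q ^ M)⁻¹ := by
    intro he
    apply hzne (2 * (M - A)) (by omega)
    field_simp at he
    rw [show (2 : ℤ) * (M - A) = M + M - (A + A) by ring, zpow_sub₀ hq,
      zpow_add₀ hq, zpow_add₀ hq, div_eq_one_iff_eq (mul_ne_zero ha ha)]
    linear_combination he
  have hvw : (q ^ M)⁻¹ ≠ q ^ A * q ^ A * (q ^ M)⁻¹ := by
    intro he
    apply hzne (A + A) (by omega)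
    field_simp at he
    rw [zpow_add₀ hq]
    linear_combination -he
  have hpow : ∀ (k : ℤ) (n : ℕ), q ^ ((n : ℤ) * k) = (q ^ k) ^ n := by
    intro k n
    rw [mul_comm, zpow_mul, zpow_natCast]
  have p2M : q ^ ((2 : ℤ) * M) = (q ^ M) ^ 2 := by
    rw [show ((2 : ℤ)) = ((2 : ℕ) : ℤ) by norm_num]; exact hpow M 2
  have p2A : q ^ ((2 : ℤ) * A) = (q ^ A) ^ 2 := by
    rw [show ((2 : ℤ)) = ((2 : ℕ) : ℤ) by norm_num]; exact hpow A 2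
  have p3M : q ^ ((3 : ℤ) * M) = (q ^ M) ^ 3 := by
    rw [show ((3 : ℤ)) = ((3 : ℕ) : ℤ) by norm_num]; exact hpow M 3
  have p3A : q ^ ((3 : ℤ) * A) = (q ^ A) ^ 3 := by
    rw [show ((3 : ℤ)) = ((3 : ℕ) : ℤ) by norm_num]; exact hpow A 3
  have e1 : (zn - z') * q ^ M + (z₁ - zn) * (q ^ M)⁻¹ + (z' - z₁) * (q ^ A * q ^ A * (q ^ M)⁻¹) = 0 := by
    have k1 := key 1 one_ne_zero
    simp only [one_mul] at k1
    linear_combination k1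
  have e2 : (zn - z') * (q ^ M) ^ 2 + (z₁ - zn) * ((q ^ M)⁻¹) ^ 2 + (z' - z₁) * (q ^ A * q ^ A * (q ^ M)⁻¹) ^ 2 = 0 := by
    have k2 := key 2 two_ne_zero
    rw [p2M, p2A] at k2
    field_simp
    field_simp at k2
    linear_combination k2
  have e3 : (zn - z') * (q ^ M) ^ 3 + (z₁ - zn) * ((q ^ M)⁻¹) ^ 3 + (z' - z₁) * (q ^ A * q ^ A * (q ^ M)⁻¹) ^ 3 = 0 := by
    have k3 := key 3 three_ne_zero
    rw [p3M, p3A] at k3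
    field_simp
    field_simp at k3
    linear_combination k3
  obtain ⟨c1, c2, _⟩ := vand3 hu hv hw huv huw hvw e1 e2 e3
  exact ⟨by linear_combination c2, by linear_combination c1⟩
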